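/- Let A₁, A₂ be finite subsets of ℝ with |A₁| ≤ |A₂|, and let Z be a finite subset of ℝ. For z ∈ ℝ set r(z) = #{(a₁,a₁′,a₂,a₂′) ∈ A₁ × A₁ × A₂ × A₂ : a₁′ + a₂′ = z(a₁ + a₂)}. Then there exist absolute constants C > 0 and c ≥ 0 such that ∑_{z ∈ Z} r(z) ≤ C·(|Z|^{1/2}·|A₁|^{5/3}·|A₂|^{4/3} + |Z|^{2/3}·|A₁|^{4/3}·|A₂|^{4/3} + |Z|·|A₁|²)·(log(2+|A₂|))^c. -/
import Mathlib


open Finset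

/-- `rQ A₁ A₂ z` counts quadruples `(a₁,a₁′,a₂,a₂′) ∈ A₁×A₁×A₂×A₂` with
`a₁′ + a₂′ = z(a₁ + a₂)`. -/
noncomputable def rQ (A₁ A₂ : Finset ℝ) (z : ℝ) : ℕ :=
  (((A₁ ×ˢ A₁) ×ˢ (A₂ ×ˢ A₂)).filter (fun p =>
    p.1.2 + p.2.2 = z * (p.1.1 + p.2.1))).card


/-- Number of points of the grid `X × X` on the line `y = z x + c`. -/
noncomputable def lineCount (X : Finset ℝ) (z c : ℝ) : ℕ :=
  ((X ×ˢ X).filter (fun p => p.2 = z * p.1 + c)).card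

lemma lineCount_le_card (X : Finset ℝ) (z c : ℝ) : lineCount X z c ≤ X.card := by
  classical
  have h : ((X ×ˢ X).filter (fun p => p.2 = z * p.1 + c)).card
      = (((X ×ˢ X).filter (fun p => p.2 = z * p.1 + c)).image Prod.fst).card := by
    rw [Finset.card_image_of_injOn]
    intro p hp q hq hpq
    simp only [Finset.coe_filter, Set.mem_setOf_eq, Finset.mem_product] at hp hq
    exact Prod.ext hpq (by rw [hp.2, hq.2, hpq])
  rw [lineCount, h]
  apply Finset.card_le_card
  intro x hx
  simp only [mem_image, mem_filter, mem_product] at hx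
  obtain ⟨p, hp, rfl⟩ := hx
  exact hp.1.1

lemma rQ_eq (A₁ A₂ : Finset ℝ) (z : ℝ) :
    rQ A₁ A₂ z = ∑ c ∈ (A₁ ×ˢ A₁).image (fun p => p.2 - z * p.1),
      lineCount A₁ z c * lineCount (A₂.image (fun x => -x)) z c := by
  classical
  have step1 : rQ A₁ A₂ z
      = ∑ p ∈ A₁ ×ˢ A₁, ((A₂ ×ˢ A₂).filter
          (fun q => z * q.1 - q.2 = p.2 - z * p.1)).card := by
    rw [rQ, Finset.card_filter, Finset.sum_product]
    refine Finset.sum_congr rfl (fun p _ => ?_)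
    rw [Finset.card_filter]
    refine Finset.sum_congr rfl (fun q _ => ?_)
    congr 1
    simp only [eq_iff_iff]
    constructor <;> intro h <;> linarith
  have step2 := Finset.sum_comp (s := A₁ ×ˢ A₁)
      (f := fun c => ((A₂ ×ˢ A₂).filter (fun q => z * q.1 - q.2 = c)).card)
      (g := fun p => p.2 - z * p.1)
  rw [step1, step2]
  refine Finset.sum_congr rfl (fun c _ => ?_)
  rw [smul_eq_mul]
  congr 1
  · -- fiber card = lineCount A₁ z c
    rw [lineCount]
    congr 1
    apply Finset.filter_congr
    intro p _
    constructor <;> intro h <;> linarith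
  · -- A₂ side via negation bijection
    rw [lineCount]
    apply Finset.card_bij (fun q _ => (-q.1, -q.2))
    · intro q hq
      simp only [mem_filter, mem_product] at hq ⊢
      refine ⟨⟨?_, ?_⟩, ?_⟩
      · exact Finset.mem_image_of_mem _ hq.1.1
      · exact Finset.mem_image_of_mem _ hq.1.2
      · have h2 := hq.2
        show -q.2 = z * -q.1 + c
        linarith
    · intro q hq q' hq' h
      simp only [Prod.mk.injEq, neg_inj] at h
      exact Prod.ext h.1 h.2
    · intro p hp
      simp only [mem_filter, mem_product, Finset.mem_image] at hp
      obtain ⟨⟨⟨x, hx, hx'⟩, ⟨y, hy, hy'⟩⟩, hline⟩ := hp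
      refine ⟨(x, y), ?_, ?_⟩
      · simp only [mem_filter, mem_product]
        refine ⟨⟨hx, hy⟩, ?_⟩
        rw [← hx', ← hy'] at hline
        show z * x - y = c
        linarith
      · exact Prod.ext hx' hy'

-- rank function
noncomputable def rnk (X : Finset ℝ) (x : ℝ) : ℕ := (X.filter (· < x)).card

lemma rnk_mono (X : Finset ℝ) {x y : ℝ} (h : x ≤ y) : rnk X x ≤ rnk X y := by
  apply Finset.card_le_card
  intro t ht
  simp only [Finset.mem_filter] at ht ⊢
  exact ⟨ht.1, lt_of_lt_of_le ht.2 h⟩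

lemma rnk_strictMonoOn (X : Finset ℝ) {x y : ℝ} (hx : x ∈ X) (h : x < y) :
    rnk X x < rnk X y := by
  apply Finset.card_lt_card
  rw [Finset.ssubset_iff_of_subset]
  · exact ⟨x, by simp [Finset.mem_filter, hx, h], by simp⟩
  · intro t ht
    simp only [Finset.mem_filter] at ht ⊢
    exact ⟨ht.1, lt_trans ht.2 h⟩

lemma rnk_le (X : Finset ℝ) {x : ℝ} (hx : x ∈ X) : rnk X x ≤ X.card - 1 := by
  have h1 : X.filter (· < x) ⊆ X.erase x := by
    intro t ht
    simp only [Finset.mem_filter] at ht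
    exact Finset.mem_erase.2 ⟨ne_of_lt ht.2, ht.1⟩
  have := Finset.card_le_card h1
  rw [Finset.card_erase_of_mem hx] at this
  exact this

lemma rnk_injOn (X : Finset ℝ) {x y : ℝ} (hx : x ∈ X) (hy : y ∈ X)
    (h : rnk X x = rnk X y) : x = y := by
  rcases lt_trichotomy x y with h1 | h1 | h1
  · exact absurd h (ne_of_lt (rnk_strictMonoOn X hx h1))
  · exact h1
  · exact absurd h.symm (ne_of_lt (rnk_strictMonoOn X hy h1))

-- block index fiber bound
lemma blockFiber_le (X : Finset ℝ) (q t : ℕ) (hq : 1 ≤ q) :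
    (X.filter (fun x => rnk X x / q = t)).card ≤ q := by
  classical
  have himg : (X.filter (fun x => rnk X x / q = t)).card
      = ((X.filter (fun x => rnk X x / q = t)).image (rnk X)).card := by
    rw [Finset.card_image_of_injOn]
    intro x hx y hy hxy
    simp only [Finset.coe_filter, Set.mem_setOf_eq] at hx hy
    exact rnk_injOn X hx.1 hy.1 hxy
  rw [himg]
  have hsub : (X.filter (fun x => rnk X x / q = t)).image (rnk X)
      ⊆ Finset.Ico (q * t) (q * t + q) := by
    intro r hr
    simp only [Finset.mem_image, Finset.mem_filter] at hr
    obtain ⟨x, ⟨_, hdiv⟩, rfl⟩ := hr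
    rw [Finset.mem_Ico]
    have h1 := Nat.div_add_mod (rnk X x) q
    have h2 : rnk X x % q < q := Nat.mod_lt _ hq
    rw [hdiv] at h1
    omega
  calc ((X.filter (fun x => rnk X x / q = t)).image (rnk X)).card
      ≤ (Finset.Ico (q * t) (q * t + q)).card := Finset.card_le_card hsub
    _ = q := by rw [Nat.card_Ico]; omega

noncomputable def cellMap (X : Finset ℝ) (q : ℕ) (p : ℝ × ℝ) : ℕ × ℕ :=
  (rnk X p.1 / q, rnk X p.2 / q)

lemma occupied_cells_le (X : Finset ℝ) (q : ℕ) (z c : ℝ) (M : ℕ)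
    (hM : ∀ x ∈ X, rnk X x / q ≤ M) :
    (((X ×ˢ X).filter (fun p => p.2 = z * p.1 + c)).image (cellMap X q)).card
      ≤ 2 * M + 1 := by
  classical
  set P := (X ×ˢ X).filter (fun p => p.2 = z * p.1 + c) with hP
  set σ : ℕ × ℕ → ℕ := fun e => if 0 ≤ z then e.1 + e.2 else e.1 + (M - e.2) with hσ
  have hPmem : ∀ p ∈ P, p.1 ∈ X ∧ p.2 ∈ X ∧ p.2 = z * p.1 + c := by
    intro p hp
    simp only [hP, Finset.mem_filter, Finset.mem_product] at hp
    exact ⟨hp.1.1, hp.1.2, hp.2⟩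
  have key : ∀ p ∈ P, ∀ p' ∈ P, p.1 ≤ p'.1 →
      σ (cellMap X q p) = σ (cellMap X q p') → cellMap X q p = cellMap X q p' := by
    intro p hp p' hp' hle hσeq
    obtain ⟨hx, hy, hl⟩ := hPmem p hp
    obtain ⟨hx', hy', hl'⟩ := hPmem p' hp'
    have h1 : rnk X p.1 / q ≤ rnk X p'.1 / q :=
      Nat.div_le_div_right (rnk_mono X hle)
    have hM2 : rnk X p.2 / q ≤ M := hM _ hy
    have hM2' : rnk X p'.2 / q ≤ M := hM _ hy'
    by_cases hz : 0 ≤ z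
    · have h2 : p.2 ≤ p'.2 := by
        rw [hl, hl']
        have : z * p.1 ≤ z * p'.1 := mul_le_mul_of_nonneg_left hle hz
        linarith
      have h2' : rnk X p.2 / q ≤ rnk X p'.2 / q :=
        Nat.div_le_div_right (rnk_mono X h2)
      simp only [hσ, if_pos hz, cellMap] at hσeq ⊢
      have : rnk X p.1 / q = rnk X p'.1 / q ∧ rnk X p.2 / q = rnk X p'.2 / q := by
        constructor <;> omega
      rw [Prod.mk.injEq]
      exact this
    · push_neg at hz
      have h2 : p'.2 ≤ p.2 := by
        rw [hl, hl']
        have : z * p'.1 ≤ z * p.1 := mul_le_mul_of_nonpos_left hle (le_of_lt hz)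
        linarith
      have h2' : rnk X p'.2 / q ≤ rnk X p.2 / q :=
        Nat.div_le_div_right (rnk_mono X h2)
      simp only [hσ, if_neg (not_le.2 hz), cellMap] at hσeq ⊢
      have : rnk X p.1 / q = rnk X p'.1 / q ∧ rnk X p.2 / q = rnk X p'.2 / q := by
        constructor <;> omega
      rw [Prod.mk.injEq]
      exact this
  have hinj : Set.InjOn σ (P.image (cellMap X q)) := by
    intro e he e' he' heq
    simp only [Finset.coe_image, Set.mem_image, Finset.mem_coe] at he he'
    obtain ⟨p, hp, rfl⟩ := he
    obtain ⟨p', hp', rfl⟩ := he'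
    rcases le_total p.1 p'.1 with h | h
    · exact key p hp p' hp' h heq
    · exact (key p' hp' p hp h heq.symm).symm
  have hcard : (P.image (cellMap X q)).card
      = ((P.image (cellMap X q)).image σ).card :=
    (Finset.card_image_of_injOn hinj).symm
  rw [hcard]
  have hsub : (P.image (cellMap X q)).image σ ⊆ Finset.range (2 * M + 1) := by
    intro v hv
    simp only [Finset.mem_image] at hv
    obtain ⟨e, he, rfl⟩ := hv
    obtain ⟨p, hp, rfl⟩ := he
    obtain ⟨hx, hy, _⟩ := hPmem p hp
    have e1 : rnk X p.1 / q ≤ M := hM _ hx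
    have e2 : rnk X p.2 / q ≤ M := hM _ hy
    simp only [Finset.mem_range, hσ, cellMap]
    have e3 : M - rnk X p.2 / q ≤ M := Nat.sub_le _ _
    split <;> omega
  calc ((P.image (cellMap X q)).image σ).card
      ≤ (Finset.range (2 * M + 1)).card := Finset.card_le_card hsub
    _ = 2 * M + 1 := Finset.card_range _

noncomputable def CPset (X : Finset ℝ) (q : ℕ) (l : ℝ × ℝ) : Finset ((ℝ × ℝ) × (ℝ × ℝ)) :=
  (((X ×ˢ X) ×ˢ (X ×ˢ X)).filter (fun pq =>
    pq.1.2 = l.1 * pq.1.1 + l.2 ∧ pq.2.2 = l.1 * pq.2.1 + l.2 ∧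
    cellMap X q pq.1 = cellMap X q pq.2 ∧ pq.1 ≠ pq.2))

lemma perLine (X : Finset ℝ) (q M K : ℕ) (hM : ∀ x ∈ X, rnk X x / q ≤ M)
    (l : ℝ × ℝ) (hKM : 4 * M + 2 ≤ K) (hk : K ≤ lineCount X l.1 l.2) :
    K ^ 2 ≤ 2 * (2 * M + 1) * (CPset X q l).card := by
  classical
  set z := l.1
  set c := l.2
  set P := (X ×ˢ X).filter (fun p => p.2 = z * p.1 + c) with hPdef
  set φ := cellMap X q with hφdef
  set O := P.image φ with hOdef
  set f : ℕ × ℕ → ℕ := fun e => (P.filter (fun p => φ p = e)).card with hfdef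
  have hk' : K ≤ P.card := hk
  -- sum of fibers = card
  have hsum : ∑ e ∈ O, f e = P.card := (Finset.card_eq_sum_card_image φ P).symm
  -- Cauchy-Schwarz
  have hO : O.card ≤ 2 * M + 1 := occupied_cells_le X q z c M hM
  have hCSn : P.card ^ 2 ≤ O.card * ∑ e ∈ O, f e ^ 2 := by
    rw [← hsum]
    exact sq_sum_le_card_mul_sum_sq
  -- ∑ f² = # same-cell ordered pairs on the line
  have hpairs : ∑ e ∈ O, f e * f e
      = ((P ×ˢ P).filter (fun pq => φ pq.1 = φ pq.2)).card := by
    rw [Finset.card_filter, Finset.sum_product]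
    have inner : ∀ p ∈ P, (∑ p' ∈ P, if φ p = φ p' then 1 else 0) = f (φ p) := by
      intro p _
      rw [show f (φ p) = ((P.filter (fun p' => φ p' = φ p)).card) from rfl,
        Finset.card_filter]
      refine Finset.sum_congr rfl (fun p' _ => ?_)
      congr 1
      simp only [eq_iff_iff]
      constructor <;> intro h <;> exact h.symm
    rw [Finset.sum_congr rfl inner]
    rw [Finset.sum_comp (fun e => f e) φ]
    refine Finset.sum_congr rfl (fun e he => ?_)
    rw [smul_eq_mul]
  -- split same-cell pairs into diagonal and off-diagonal
  have hsplit : ((P ×ˢ P).filter (fun pq => φ pq.1 = φ pq.2)).card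
      = P.card + (CPset X q l).card := by
    have h1 := Finset.card_filter_add_card_filter_not
      (s := (P ×ˢ P).filter (fun pq => φ pq.1 = φ pq.2))
      (p := fun pq => pq.1 = pq.2)
    rw [Finset.filter_filter, Finset.filter_filter] at h1
    -- diagonal card = P.card
    have hdiag : ((P ×ˢ P).filter (fun pq => φ pq.1 = φ pq.2 ∧ pq.1 = pq.2)).card
        = P.card := by
      apply Finset.card_bij (fun pq _ => pq.1)
      · intro pq hpq
        simp only [Finset.mem_filter, Finset.mem_product] at hpq
        exact hpq.1.1
      · intro pq hpq pq' hpq' h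
        simp only [Finset.mem_filter, Finset.mem_product] at hpq hpq'
        rw [Prod.ext_iff]
        constructor
        · exact h
        · rw [← hpq.2.2, ← hpq'.2.2, h]
      · intro p hp
        exact ⟨(p, p), Finset.mem_filter.mpr ⟨Finset.mem_product.mpr ⟨hp, hp⟩, rfl, rfl⟩, rfl⟩
    -- off-diagonal = CPset
    have hoff : ((P ×ˢ P).filter (fun pq => φ pq.1 = φ pq.2 ∧ ¬pq.1 = pq.2))
        = CPset X q l := by
      ext pq
      simp only [CPset, Finset.mem_filter, Finset.mem_product, hPdef, ne_eq]
      tauto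
    rw [hdiag, hoff] at h1
    exact h1.symm
  -- combine
  have hsq : ∀ e, f e ^ 2 = f e * f e := fun e => sq (f e)
  have hkey : P.card ^ 2 ≤ (2 * M + 1) * (P.card + (CPset X q l).card) := by
    calc P.card ^ 2 ≤ O.card * ∑ e ∈ O, f e ^ 2 := hCSn
      _ = O.card * ∑ e ∈ O, f e * f e := by
          congr 1
          exact Finset.sum_congr rfl (fun e _ => hsq e)
      _ = O.card * (P.card + (CPset X q l).card) := by rw [hpairs, hsplit]
      _ ≤ (2 * M + 1) * (P.card + (CPset X q l).card) :=
          Nat.mul_le_mul_right _ hO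
  -- K ≥ 4M+2 = 2(2M+1), so P.card ≥ 2(2M+1) and we can absorb the linear term
  have habs : P.card ^ 2 ≤ 2 * (2 * M + 1) * (CPset X q l).card := by
    have h2 : 2 * (2 * M + 1) ≤ P.card := by omega
    nlinarith [hkey, hk', h2]
  calc K ^ 2 ≤ P.card ^ 2 := Nat.pow_le_pow_left hk' 2
    _ ≤ 2 * (2 * M + 1) * (CPset X q l).card := habs

lemma CPset_subset (X : Finset ℝ) (q : ℕ) (l : ℝ × ℝ) :
    CPset X q l ⊆ (((X ×ˢ X) ×ˢ (X ×ˢ X)).filter (fun pq =>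
      cellMap X q pq.1 = cellMap X q pq.2)) := by
  intro pq hpq
  simp only [CPset, Finset.mem_filter] at hpq ⊢
  exact ⟨hpq.1, hpq.2.2.2.1⟩

lemma CPset_disjoint (X : Finset ℝ) (q : ℕ) {l l' : ℝ × ℝ} (hne : l ≠ l') :
    Disjoint (CPset X q l) (CPset X q l') := by
  rw [Finset.disjoint_left]
  intro pq hpq hpq'
  simp only [CPset, Finset.mem_filter] at hpq hpq'
  obtain ⟨-, h1, h2, -, hne12⟩ := hpq
  obtain ⟨-, h1', h2', -, -⟩ := hpq'
  apply hne
  have hx : pq.1.1 ≠ pq.2.1 := by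
    intro h
    apply hne12
    have : pq.1.2 = pq.2.2 := by rw [h1, h2, h]
    exact Prod.ext h this
  have hz : l.1 = l'.1 := by
    by_contra hzz
    apply hx
    have e1 : (l.1 - l'.1) * pq.1.1 = l'.2 - l.2 := by linarith [h1, h1']
    have e2 : (l.1 - l'.1) * pq.2.1 = l'.2 - l.2 := by linarith [h2, h2']
    have := e1.trans e2.symm
    exact mul_left_cancel₀ (sub_ne_zero.2 hzz) this
  have hc : l.2 = l'.2 := by
    have := h1.symm.trans h1'
    rw [hz] at this
    linarith
  exact Prod.ext hz hc

lemma sameCell_card_le (X : Finset ℝ) (q : ℕ) (hq : 1 ≤ q) :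
    ((((X ×ˢ X) ×ˢ (X ×ˢ X)).filter (fun pq =>
      cellMap X q pq.1 = cellMap X q pq.2))).card ≤ X.card ^ 2 * q ^ 2 := by
  classical
  rw [Finset.card_filter, Finset.sum_product]
  have hinner : ∀ p ∈ X ×ˢ X,
      (∑ p' ∈ X ×ˢ X, if cellMap X q p = cellMap X q p' then 1 else 0) ≤ q ^ 2 := by
    intro p _
    rw [← Finset.card_filter]
    have hsub : (X ×ˢ X).filter (fun p' => cellMap X q p = cellMap X q p')
        ⊆ (X.filter (fun x => rnk X x / q = rnk X p.1 / q)) ×ˢ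
          (X.filter (fun y => rnk X y / q = rnk X p.2 / q)) := by
      intro p' hp'
      simp only [Finset.mem_filter, Finset.mem_product] at hp' ⊢
      have h1 : rnk X p.1 / q = rnk X p'.1 / q ∧ rnk X p.2 / q = rnk X p'.2 / q := by
        have := hp'.2
        simp only [cellMap, Prod.mk.injEq] at this
        exact this
      exact ⟨⟨hp'.1.1, h1.1.symm⟩, ⟨hp'.1.2, h1.2.symm⟩⟩
    calc ((X ×ˢ X).filter (fun p' => cellMap X q p = cellMap X q p')).card
        ≤ _ := Finset.card_le_card hsub
      _ ≤ q * q := by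
          rw [Finset.card_product]
          exact Nat.mul_le_mul (blockFiber_le X q _ hq) (blockFiber_le X q _ hq)
      _ = q ^ 2 := (sq q).symm
  calc (∑ p ∈ X ×ˢ X, ∑ p' ∈ X ×ˢ X, if cellMap X q p = cellMap X q p' then 1 else 0)
      ≤ ∑ _p ∈ X ×ˢ X, q ^ 2 := Finset.sum_le_sum hinner
    _ = X.card ^ 2 * q ^ 2 := by
        rw [Finset.sum_const, smul_eq_mul, Finset.card_product]
        ring

lemma richLines (X : Finset ℝ) (L : Finset (ℝ × ℝ)) (K : ℕ) (hK : 2 ≤ K)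
    (hL : ∀ l ∈ L, K ≤ lineCount X l.1 l.2) :
    L.card * K ^ 3 ≤ 289 * X.card ^ 4 := by
  classical
  rcases L.eq_empty_or_nonempty with rfl | ⟨l₀, hl₀⟩
  · simp
  set n := X.card with hn
  have hKn : K ≤ n := le_trans (hL l₀ hl₀) (lineCount_le_card X l₀.1 l₀.2)
  have hn1 : 1 ≤ n := le_trans (le_trans one_le_two hK) hKn
  set q := 16 * n / K + 1 with hq
  have hq1 : 1 ≤ q := Nat.le_add_left 1 _
  set M := (n - 1) / q with hM
  have hKpos : 0 < K := lt_of_lt_of_le two_pos hK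
  -- 16 * M < K
  have h16M : 16 * M < K := by
    have h1 : K * q > 16 * n := by
      have := Nat.div_add_mod (16 * n) K
      have hmod : 16 * n % K < K := Nat.mod_lt _ hKpos
      calc K * q = K * (16 * n / K) + K := by rw [hq]; ring
        _ > 16 * n := by omega
    have h2 : M * q ≤ n - 1 := Nat.div_mul_le_self _ _
    have h3 : 16 * (M * q) ≤ 16 * (n - 1) := Nat.mul_le_mul_left _ h2
    have h4 : 16 * M * q < K * q := by
      calc 16 * M * q = 16 * (M * q) := by ring
        _ ≤ 16 * (n - 1) := h3
        _ < 16 * n := by omega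
        _ < K * q := h1
    exact Nat.lt_of_mul_lt_mul_right h4
  have hKM : 4 * M + 2 ≤ K := by omega
  have hMbound : ∀ x ∈ X, rnk X x / q ≤ M := by
    intro x hx
    exact Nat.div_le_div_right (rnk_le X hx)
  -- per-line bound, summed
  have hsumbound : L.card * K ^ 2 ≤ 2 * (2 * M + 1) * (n ^ 2 * q ^ 2) := by
    have hper : ∀ l ∈ L, K ^ 2 ≤ 2 * (2 * M + 1) * (CPset X q l).card := by
      intro l hl
      exact perLine X q M K hMbound l hKM (hL l hl)
    have h1 : L.card * K ^ 2 ≤ ∑ l ∈ L, 2 * (2 * M + 1) * (CPset X q l).card := by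
      rw [← Finset.sum_const_nat (m := K ^ 2) (fun _ h => rfl)]
      · exact Finset.sum_le_sum hper
    have h2 : ∑ l ∈ L, (CPset X q l).card ≤ n ^ 2 * q ^ 2 := by
      rw [← Finset.card_biUnion (fun l _ l' _ h => CPset_disjoint X q h)]
      calc (L.biUnion (fun l => CPset X q l)).card
          ≤ ((((X ×ˢ X) ×ˢ (X ×ˢ X)).filter (fun pq =>
              cellMap X q pq.1 = cellMap X q pq.2))).card := by
            apply Finset.card_le_card
            intro pq hpq
            obtain ⟨l, hl, hmem⟩ := Finset.mem_biUnion.1 hpq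
            exact CPset_subset X q l hmem
        _ ≤ n ^ 2 * q ^ 2 := sameCell_card_le X q hq1
    calc L.card * K ^ 2 ≤ ∑ l ∈ L, 2 * (2 * M + 1) * (CPset X q l).card := h1
      _ = 2 * (2 * M + 1) * ∑ l ∈ L, (CPset X q l).card := by
          rw [Finset.mul_sum]
      _ ≤ 2 * (2 * M + 1) * (n ^ 2 * q ^ 2) := Nat.mul_le_mul_left _ h2
  -- q * K ≤ 17 * n
  have hqK : q * K ≤ 17 * n := by
    have h1 : (16 * n / K) * K ≤ 16 * n := Nat.div_mul_le_self _ _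
    calc q * K = (16 * n / K) * K + K := by rw [hq]; ring
      _ ≤ 16 * n + n := by omega
      _ = 17 * n := by ring
  -- final assembly: L * K^4 ≤ 289 * n^4 * K
  have hfinal : L.card * K ^ 3 * K ≤ 289 * n ^ 4 * K := by
    have h5 : 2 * (2 * M + 1) ≤ K := by omega
    calc L.card * K ^ 3 * K = (L.card * K ^ 2) * K ^ 2 := by ring
      _ ≤ (2 * (2 * M + 1) * (n ^ 2 * q ^ 2)) * K ^ 2 :=
          Nat.mul_le_mul_right _ hsumbound
      _ = (2 * (2 * M + 1)) * (n ^ 2 * (q * K) ^ 2) := by ring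
      _ ≤ K * (n ^ 2 * (17 * n) ^ 2) := by
          apply Nat.mul_le_mul h5
          apply Nat.mul_le_mul_left
          exact Nat.pow_le_pow_left hqK 2
      _ = 289 * n ^ 4 * K := by ring
  exact Nat.le_of_mul_le_mul_right hfinal hKpos

lemma sum_lineCount_le (X : Finset ℝ) (z : ℝ) (U : Finset ℝ) :
    ∑ c ∈ U, lineCount X z c ≤ X.card ^ 2 := by
  classical
  have hdisj : ∀ c ∈ U, ∀ c' ∈ U, c ≠ c' →
      Disjoint ((X ×ˢ X).filter (fun p => p.2 = z * p.1 + c))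
        ((X ×ˢ X).filter (fun p => p.2 = z * p.1 + c')) := by
    intro c _ c' _ hne
    rw [Finset.disjoint_left]
    intro p hp hp'
    simp only [Finset.mem_filter] at hp hp'
    apply hne
    have := hp.2.symm.trans hp'.2
    linarith
  calc ∑ c ∈ U, lineCount X z c
      = (U.biUnion (fun c => (X ×ˢ X).filter (fun p => p.2 = z * p.1 + c))).card :=
        (Finset.card_biUnion hdisj).symm
    _ ≤ (X ×ˢ X).card := by
        apply Finset.card_le_card
        intro p hp
        obtain ⟨c, _, hmem⟩ := Finset.mem_biUnion.1 hp
        exact Finset.mem_of_mem_filter p hmem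
    _ = X.card ^ 2 := by rw [Finset.card_product, sq]

lemma dyadic_cover {k a : ℕ} (hk : k ≤ a) :
    k ≤ ∑ i ∈ Finset.range (Nat.log 2 a + 1), 2 ^ i * (if 2 ^ i ≤ k then 1 else 0) := by
  rcases Nat.eq_zero_or_pos k with rfl | hk0
  · exact Nat.zero_le _
  have hi₀ : Nat.log 2 k ≤ Nat.log 2 a := Nat.log_mono_right hk
  have hsub : Finset.range (Nat.log 2 k + 1) ⊆ Finset.range (Nat.log 2 a + 1) := by
    apply Finset.range_subset_range.2; omega
  have hterm : ∀ i ∈ Finset.range (Nat.log 2 k + 1),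
      2 ^ i * (if 2 ^ i ≤ k then 1 else 0) = 2 ^ i := by
    intro i hi
    rw [Finset.mem_range] at hi
    have h1 : 2 ^ i ≤ 2 ^ Nat.log 2 k := Nat.pow_le_pow_right (by norm_num) (by omega)
    have h2 : 2 ^ Nat.log 2 k ≤ k := Nat.pow_log_le_self 2 (by omega)
    rw [if_pos (le_trans h1 h2)]
    ring
  calc k ≤ 2 ^ (Nat.log 2 k + 1) - 1 := by
        have := Nat.lt_pow_succ_log_self (by norm_num : 1 < 2) k
        omega
    _ = ∑ i ∈ Finset.range (Nat.log 2 k + 1), 2 ^ i := by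
        rw [Nat.geomSum_eq (le_refl 2)]
        omega
    _ = ∑ i ∈ Finset.range (Nat.log 2 k + 1), 2 ^ i * (if 2 ^ i ≤ k then 1 else 0) :=
        (Finset.sum_congr rfl hterm).symm
    _ ≤ _ := Finset.sum_le_sum_of_subset hsub


lemma rpow_mul_pow (x : ℝ) (hx : 0 ≤ x) (p : ℝ) (n m : ℕ) (h : p * (n : ℝ) = (m : ℝ)) :
    (x ^ p) ^ n = x ^ m := by
  rw [← Real.rpow_natCast (x ^ p) n, ← Real.rpow_mul hx, h, Real.rpow_natCast]

set_option maxHeartbeats 3200000 in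
theorem sum_r_asymmetric_bound :
    ∃ C c : ℝ, 0 < C ∧ 0 ≤ c ∧
      ∀ A₁ A₂ Z : Finset ℝ, A₁.card ≤ A₂.card →
        (∑ z ∈ Z, (rQ A₁ A₂ z : ℝ)) ≤
          C * ((Z.card : ℝ) ^ ((1 : ℝ) / 2) * (A₁.card : ℝ) ^ ((5 : ℝ) / 3) *
                (A₂.card : ℝ) ^ ((4 : ℝ) / 3)
              + (Z.card : ℝ) ^ ((2 : ℝ) / 3) * (A₁.card : ℝ) ^ ((4 : ℝ) / 3) *
                (A₂.card : ℝ) ^ ((4 : ℝ) / 3)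
              + (Z.card : ℝ) * (A₁.card : ℝ) ^ 2) *
            Real.log (2 + (A₂.card : ℝ)) ^ c := by
  classical
  refine ⟨153, 2, by norm_num, by norm_num, ?_⟩
  intro A₁ A₂ Z hab
  set a := A₁.card with ha
  set b := A₂.card with hb
  set m := Z.card with hm
  set T1 : ℝ := (m : ℝ) ^ ((1 : ℝ) / 2) * (a : ℝ) ^ ((5 : ℝ) / 3) * (b : ℝ) ^ ((4 : ℝ) / 3)
    with hT1
  set T2 : ℝ := (m : ℝ) ^ ((2 : ℝ) / 3) * (a : ℝ) ^ ((4 : ℝ) / 3) * (b : ℝ) ^ ((4 : ℝ) / 3)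
    with hT2
  set T3 : ℝ := (m : ℝ) * (a : ℝ) ^ 2 with hT3
  have hT1n : 0 ≤ T1 := by positivity
  have hT2n : 0 ≤ T2 := by positivity
  have hT3n : 0 ≤ T3 := by positivity
  have hlog2 : Real.log 2 ≤ Real.log (2 + (b : ℝ)) := by
    apply Real.log_le_log (by norm_num)
    have : (0:ℝ) ≤ (b:ℝ) := Nat.cast_nonneg b
    linarith
  have hlogpos : 0 < Real.log (2 + (b : ℝ)) :=
    lt_of_lt_of_le (Real.log_pos (by norm_num)) hlog2
  have hrpow2 : Real.log (2 + (b : ℝ)) ^ (2 : ℝ) = Real.log (2 + (b : ℝ)) ^ (2 : ℕ) := by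
    rw [show ((2:ℝ)) = ((2:ℕ):ℝ) by norm_num, Real.rpow_natCast]
  rcases Nat.eq_zero_or_pos a with ha0 | ha1
  · have hA₁ : A₁ = ∅ := Finset.card_eq_zero.1 ha0
    have hzero : ∀ z : ℝ, rQ A₁ A₂ z = 0 := by
      intro z
      simp [rQ, hA₁]
    have hS0 : (∑ z ∈ Z, (rQ A₁ A₂ z : ℝ)) = 0 := by
      apply Finset.sum_eq_zero
      intro z _
      rw [hzero z]; norm_num
    rw [hS0, hrpow2]
    positivity
  have hb1 : 1 ≤ b := le_trans ha1 hab
  set B := A₂.image (fun x => -x) with hB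
  have hBcard : B.card = b := Finset.card_image_of_injective _ neg_injective
  set U := Z.biUnion (fun z => (A₁ ×ˢ A₁).image (fun p => p.2 - z * p.1)) with hU
  set kf : ℝ × ℝ → ℕ := fun l => lineCount A₁ l.1 l.2 with hkf
  set wf : ℝ × ℝ → ℕ := fun l => lineCount B l.1 l.2 with hwf
  have hkfle : ∀ l : ℝ × ℝ, kf l ≤ a := fun l => lineCount_le_card A₁ l.1 l.2
  have hwfle : ∀ l : ℝ × ℝ, wf l ≤ b := by
    intro l
    rw [← hBcard]
    exact lineCount_le_card B l.1 l.2
  set I := Nat.log 2 a with hI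
  set J := Nat.log 2 b with hJ
  set Nc : ℕ → ℕ → ℕ := fun i j =>
    ((Z ×ˢ U).filter (fun l => 2 ^ i ≤ kf l ∧ 2 ^ j ≤ wf l)).card with hNc
  have stepA : (∑ z ∈ Z, rQ A₁ A₂ z) ≤ ∑ l ∈ Z ×ˢ U, kf l * wf l := by
    rw [Finset.sum_product]
    apply Finset.sum_le_sum
    intro z hz
    rw [rQ_eq]
    apply Finset.sum_le_sum_of_subset
    intro c hc
    exact Finset.mem_biUnion.2 ⟨z, hz, hc⟩
  have stepB : ∑ l ∈ Z ×ˢ U, kf l * wf l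
      ≤ ∑ i ∈ Finset.range (I + 1), ∑ j ∈ Finset.range (J + 1),
          2 ^ i * 2 ^ j * Nc i j := by
    have h1 : ∀ l ∈ Z ×ˢ U, kf l * wf l
        ≤ ∑ i ∈ Finset.range (I + 1), ∑ j ∈ Finset.range (J + 1),
            (2 ^ i * (if 2 ^ i ≤ kf l then 1 else 0)) *
            (2 ^ j * (if 2 ^ j ≤ wf l then 1 else 0)) := by
      intro l _
      rw [← Finset.sum_mul_sum]
      exact Nat.mul_le_mul (dyadic_cover (hkfle l)) (dyadic_cover (hwfle l))
    calc ∑ l ∈ Z ×ˢ U, kf l * wf l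
        ≤ ∑ l ∈ Z ×ˢ U, ∑ i ∈ Finset.range (I + 1), ∑ j ∈ Finset.range (J + 1),
            (2 ^ i * (if 2 ^ i ≤ kf l then 1 else 0)) *
            (2 ^ j * (if 2 ^ j ≤ wf l then 1 else 0)) := Finset.sum_le_sum h1
      _ = ∑ i ∈ Finset.range (I + 1), ∑ j ∈ Finset.range (J + 1),
            ∑ l ∈ Z ×ˢ U,
            (2 ^ i * (if 2 ^ i ≤ kf l then 1 else 0)) *
            (2 ^ j * (if 2 ^ j ≤ wf l then 1 else 0)) := by
          rw [Finset.sum_comm]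
          exact Finset.sum_congr rfl (fun i _ => Finset.sum_comm)
      _ = ∑ i ∈ Finset.range (I + 1), ∑ j ∈ Finset.range (J + 1),
            2 ^ i * 2 ^ j * Nc i j := by
          refine Finset.sum_congr rfl (fun i _ => Finset.sum_congr rfl (fun j _ => ?_))
          have h2 : ∀ l ∈ Z ×ˢ U,
              (2 ^ i * (if 2 ^ i ≤ kf l then 1 else 0)) *
              (2 ^ j * (if 2 ^ j ≤ wf l then 1 else 0))
              = 2 ^ i * 2 ^ j * (if 2 ^ i ≤ kf l ∧ 2 ^ j ≤ wf l then 1 else 0) := by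
            intro l _
            by_cases hik : 2 ^ i ≤ kf l <;> by_cases hjw : 2 ^ j ≤ wf l <;>
              simp [hik, hjw]
          rw [Finset.sum_congr rfl h2, ← Finset.mul_sum]
          congr 1
          rw [show Nc i j = ((Z ×ˢ U).filter
            (fun l => 2 ^ i ≤ kf l ∧ 2 ^ j ≤ wf l)).card from rfl, Finset.card_filter]
    -- counting bound (P): total incidences per dyadic class
  have hC1 : ∀ i j : ℕ, 2 ^ i * Nc i j ≤ m * a ^ 2 := by
    intro i j
    have h1 : 2 ^ i * Nc i j
        = ∑ _l ∈ (Z ×ˢ U).filter (fun l => 2 ^ i ≤ kf l ∧ 2 ^ j ≤ wf l), 2 ^ i := by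
      rw [Finset.sum_const, smul_eq_mul, mul_comm]
    have h2 : ∑ _l ∈ (Z ×ˢ U).filter (fun l => 2 ^ i ≤ kf l ∧ 2 ^ j ≤ wf l), 2 ^ i
        ≤ ∑ l ∈ (Z ×ˢ U).filter (fun l => 2 ^ i ≤ kf l ∧ 2 ^ j ≤ wf l), kf l :=
      Finset.sum_le_sum (fun l hl => (Finset.mem_filter.1 hl).2.1)
    have h3 : ∑ l ∈ (Z ×ˢ U).filter (fun l => 2 ^ i ≤ kf l ∧ 2 ^ j ≤ wf l), kf l
        ≤ ∑ l ∈ Z ×ˢ U, kf l :=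
      Finset.sum_le_sum_of_subset (Finset.filter_subset _ _)
    have h4 : ∑ l ∈ Z ×ˢ U, kf l ≤ m * a ^ 2 := by
      rw [Finset.sum_product]
      calc ∑ z ∈ Z, ∑ c ∈ U, lineCount A₁ z c
          ≤ ∑ _z ∈ Z, a ^ 2 := Finset.sum_le_sum (fun z _ => sum_lineCount_le A₁ z U)
        _ = m * a ^ 2 := by rw [Finset.sum_const, smul_eq_mul]
    omega
  have hC2 : ∀ i j : ℕ, 1 ≤ i → Nc i j * (2 ^ i) ^ 3 ≤ 289 * a ^ 4 := by
    intro i j hi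
    have h2i : 2 ≤ 2 ^ i := by
      calc 2 = 2 ^ 1 := (pow_one 2).symm
        _ ≤ 2 ^ i := Nat.pow_le_pow_right (by norm_num) hi
    exact richLines A₁ _ (2 ^ i) h2i
      (fun l hl => (Finset.mem_filter.1 hl).2.1)
  have hC3 : ∀ i j : ℕ, 1 ≤ j → Nc i j * (2 ^ j) ^ 3 ≤ 289 * b ^ 4 := by
    intro i j hj
    have h2j : 2 ≤ 2 ^ j := by
      calc 2 = 2 ^ 1 := (pow_one 2).symm
        _ ≤ 2 ^ j := Nat.pow_le_pow_right (by norm_num) hj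
    have := richLines B _ (2 ^ j) h2j
      (fun l (hl : l ∈ (Z ×ˢ U).filter (fun l => 2 ^ i ≤ kf l ∧ 2 ^ j ≤ wf l)) =>
        (Finset.mem_filter.1 hl).2.2)
    rwa [hBcard] at this
  -- per-level real bound
  have perLevel : ∀ i j : ℕ,
      ((2 ^ i * 2 ^ j * Nc i j : ℕ) : ℝ) ≤ 17 * (T1 + T2 + T3) := by
    intro i j
    rcases Nat.eq_zero_or_pos j with hj0 | hj1
    · subst hj0
      have h := hC1 i 0
      have h' : 2 ^ i * 2 ^ 0 * Nc i 0 ≤ m * a ^ 2 := by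
        simpa using h
      calc ((2 ^ i * 2 ^ 0 * Nc i 0 : ℕ) : ℝ) ≤ ((m * a ^ 2 : ℕ) : ℝ) := Nat.cast_le.2 h'
        _ = T3 := by rw [hT3]; push_cast; ring
        _ ≤ 17 * (T1 + T2 + T3) := by linarith
    rcases Nat.eq_zero_or_pos i with hi0 | hi1
    · subst hi0
      have hn1 : Nc 0 j ≤ m * a ^ 2 := by simpa using hC1 0 j
      have hn2 : Nc 0 j * (2 ^ j) ^ 3 ≤ 289 * b ^ 4 := hC3 0 j hj1
      have hcube : (2 ^ 0 * 2 ^ j * Nc 0 j) ^ 3 ≤ 343 * (m ^ 2 * a ^ 4 * b ^ 4) := by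
        calc (2 ^ 0 * 2 ^ j * Nc 0 j) ^ 3
            = (Nc 0 j) ^ 2 * (Nc 0 j * (2 ^ j) ^ 3) := by ring
          _ ≤ (m * a ^ 2) ^ 2 * (289 * b ^ 4) :=
              Nat.mul_le_mul (Nat.pow_le_pow_left hn1 2) hn2
          _ = 289 * (m ^ 2 * a ^ 4 * b ^ 4) := by ring
          _ ≤ 343 * (m ^ 2 * a ^ 4 * b ^ 4) := Nat.mul_le_mul_right _ (by norm_num)
      have hT2cube : (7 * T2) ^ 3 = 343 * ((m:ℝ) ^ 2 * (a:ℝ) ^ 4 * (b:ℝ) ^ 4) := by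
        rw [hT2, mul_pow, mul_pow, mul_pow,
            rpow_mul_pow _ (Nat.cast_nonneg m) _ 3 2 (by norm_num),
            rpow_mul_pow _ (Nat.cast_nonneg a) _ 3 4 (by norm_num),
            rpow_mul_pow _ (Nat.cast_nonneg b) _ 3 4 (by norm_num)]
        norm_num
      have hpow3 : ((2 ^ 0 * 2 ^ j * Nc 0 j : ℕ) : ℝ) ^ 3 ≤ (7 * T2) ^ 3 := by
        rw [hT2cube]
        calc ((2 ^ 0 * 2 ^ j * Nc 0 j : ℕ) : ℝ) ^ 3
            = (((2 ^ 0 * 2 ^ j * Nc 0 j) ^ 3 : ℕ) : ℝ) := by push_cast; ring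
          _ ≤ ((343 * (m ^ 2 * a ^ 4 * b ^ 4) : ℕ) : ℝ) := Nat.cast_le.2 hcube
          _ = 343 * ((m:ℝ) ^ 2 * (a:ℝ) ^ 4 * (b:ℝ) ^ 4) := by push_cast; ring
      have hfin : ((2 ^ 0 * 2 ^ j * Nc 0 j : ℕ) : ℝ) ≤ 7 * T2 :=
        le_of_pow_le_pow_left₀ (by norm_num) (by linarith) hpow3
      calc ((2 ^ 0 * 2 ^ j * Nc 0 j : ℕ) : ℝ) ≤ 7 * T2 := hfin
        _ ≤ 17 * (T1 + T2 + T3) := by linarith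
    · have hn1 : 2 ^ i * Nc i j ≤ m * a ^ 2 := hC1 i j
      have hn2 : Nc i j * (2 ^ i) ^ 3 ≤ 289 * a ^ 4 := hC2 i j hi1
      have hn3 : Nc i j * (2 ^ j) ^ 3 ≤ 289 * b ^ 4 := hC3 i j hj1
      have h6 : (2 ^ i * 2 ^ j * Nc i j) ^ 6 ≤ 289 ^ 3 * (m ^ 3 * a ^ 10 * b ^ 8) := by
        calc (2 ^ i * 2 ^ j * Nc i j) ^ 6
            = (2 ^ i * Nc i j) ^ 3 * (Nc i j * (2 ^ i) ^ 3) * (Nc i j * (2 ^ j) ^ 3) ^ 2 := by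
              ring
          _ ≤ (m * a ^ 2) ^ 3 * (289 * a ^ 4) * (289 * b ^ 4) ^ 2 :=
              Nat.mul_le_mul (Nat.mul_le_mul (Nat.pow_le_pow_left hn1 3) hn2)
                (Nat.pow_le_pow_left hn3 2)
          _ = 289 ^ 3 * (m ^ 3 * a ^ 10 * b ^ 8) := by ring
      have hT1pow : (17 * T1) ^ 6 = 289 ^ 3 * ((m:ℝ) ^ 3 * (a:ℝ) ^ 10 * (b:ℝ) ^ 8) := by
        rw [hT1, mul_pow, mul_pow, mul_pow,
            rpow_mul_pow _ (Nat.cast_nonneg m) _ 6 3 (by norm_num),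
            rpow_mul_pow _ (Nat.cast_nonneg a) _ 6 10 (by norm_num),
            rpow_mul_pow _ (Nat.cast_nonneg b) _ 6 8 (by norm_num)]
        norm_num
      have hpow6 : ((2 ^ i * 2 ^ j * Nc i j : ℕ) : ℝ) ^ 6 ≤ (17 * T1) ^ 6 := by
        rw [hT1pow]
        calc ((2 ^ i * 2 ^ j * Nc i j : ℕ) : ℝ) ^ 6
            = (((2 ^ i * 2 ^ j * Nc i j) ^ 6 : ℕ) : ℝ) := by push_cast; ring
          _ ≤ ((289 ^ 3 * (m ^ 3 * a ^ 10 * b ^ 8) : ℕ) : ℝ) := Nat.cast_le.2 h6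
          _ = 289 ^ 3 * ((m:ℝ) ^ 3 * (a:ℝ) ^ 10 * (b:ℝ) ^ 8) := by push_cast; ring
      have hfin : ((2 ^ i * 2 ^ j * Nc i j : ℕ) : ℝ) ≤ 17 * T1 :=
        le_of_pow_le_pow_left₀ (by norm_num) (by linarith) hpow6
      linarith
  -- assemble over levels
  have hlevels : (∑ z ∈ Z, (rQ A₁ A₂ z : ℝ))
      ≤ ((I : ℝ) + 1) * ((J : ℝ) + 1) * (17 * (T1 + T2 + T3)) := by
    have h0 : (∑ z ∈ Z, rQ A₁ A₂ z)
        ≤ ∑ i ∈ Finset.range (I + 1), ∑ j ∈ Finset.range (J + 1), 2 ^ i * 2 ^ j * Nc i j :=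
      le_trans stepA stepB
    calc (∑ z ∈ Z, (rQ A₁ A₂ z : ℝ))
        = ((∑ z ∈ Z, rQ A₁ A₂ z : ℕ) : ℝ) := by push_cast; rfl
      _ ≤ ((∑ i ∈ Finset.range (I + 1), ∑ j ∈ Finset.range (J + 1),
            2 ^ i * 2 ^ j * Nc i j : ℕ) : ℝ) := Nat.cast_le.2 h0
      _ = ∑ i ∈ Finset.range (I + 1), ∑ j ∈ Finset.range (J + 1),
            ((2 ^ i * 2 ^ j * Nc i j : ℕ) : ℝ) := by push_cast; rfl
      _ ≤ ∑ _i ∈ Finset.range (I + 1), ∑ _j ∈ Finset.range (J + 1),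
            17 * (T1 + T2 + T3) := by
          apply Finset.sum_le_sum
          intro i _
          apply Finset.sum_le_sum
          intro j _
          exact perLevel i j
      _ = ((I : ℝ) + 1) * ((J : ℝ) + 1) * (17 * (T1 + T2 + T3)) := by
          rw [Finset.sum_const, Finset.sum_const, Finset.card_range, Finset.card_range]
          push_cast
          ring
  -- logarithmic bounds on the number of levels
  have hlog2pos : (0:ℝ) < Real.log 2 := Real.log_pos one_lt_two
  have hlog23 : (2:ℝ)/3 ≤ Real.log 2 := by
    have := Real.log_two_gt_d9
    linarith
  have hIlog : ((I : ℝ) + 1) ≤ 3 * Real.log (2 + (b : ℝ)) := by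
    have h2I : ((2 : ℕ) ^ I : ℝ) ≤ (a : ℝ) := by
      exact_mod_cast Nat.pow_log_le_self 2 (Nat.pos_iff_ne_zero.1 ha1)
    have hab' : (a : ℝ) ≤ 2 + (b : ℝ) := by
      have : (a:ℝ) ≤ (b:ℝ) := Nat.cast_le.2 hab
      linarith
    have hlogI : (I : ℝ) * Real.log 2 ≤ Real.log (2 + (b : ℝ)) := by
      calc (I : ℝ) * Real.log 2 = Real.log (((2:ℝ)) ^ I) := (Real.log_pow (n := I) (x := 2)).symm
        _ ≤ Real.log (2 + (b : ℝ)) := by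
            apply Real.log_le_log (by positivity)
            calc ((2:ℝ)) ^ I = ((2:ℕ) ^ I : ℝ) := by push_cast; ring
              _ ≤ (a : ℝ) := h2I
              _ ≤ 2 + (b : ℝ) := hab'
    nlinarith [hlogpos, hlog2]
  have hJlog : ((J : ℝ) + 1) ≤ 3 * Real.log (2 + (b : ℝ)) := by
    have h2J : ((2 : ℕ) ^ J : ℝ) ≤ (b : ℝ) := by
      exact_mod_cast Nat.pow_log_le_self 2 (Nat.pos_iff_ne_zero.1 hb1)
    have hlogJ : (J : ℝ) * Real.log 2 ≤ Real.log (2 + (b : ℝ)) := by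
      calc (J : ℝ) * Real.log 2 = Real.log (((2:ℝ)) ^ J) := (Real.log_pow (n := J) (x := 2)).symm
        _ ≤ Real.log (2 + (b : ℝ)) := by
            apply Real.log_le_log (by positivity)
            calc ((2:ℝ)) ^ J = ((2:ℕ) ^ J : ℝ) := by push_cast; ring
              _ ≤ (b : ℝ) := h2J
              _ ≤ 2 + (b : ℝ) := by linarith [Nat.cast_nonneg (α := ℝ) b]
    nlinarith [hlogpos, hlog2]
  have h9 : ((I : ℝ) + 1) * ((J : ℝ) + 1)
      ≤ 9 * Real.log (2 + (b : ℝ)) ^ 2 := by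
    have hI0 : (0:ℝ) ≤ (I : ℝ) + 1 := by positivity
    have hJ0 : (0:ℝ) ≤ (J : ℝ) + 1 := by positivity
    calc ((I : ℝ) + 1) * ((J : ℝ) + 1)
        ≤ (3 * Real.log (2 + (b : ℝ))) * (3 * Real.log (2 + (b : ℝ))) := by
          apply mul_le_mul hIlog hJlog hJ0 (by positivity)
      _ = 9 * Real.log (2 + (b : ℝ)) ^ 2 := by ring
  rw [hrpow2]
  calc (∑ z ∈ Z, (rQ A₁ A₂ z : ℝ))
      ≤ ((I : ℝ) + 1) * ((J : ℝ) + 1) * (17 * (T1 + T2 + T3)) := hlevels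
    _ ≤ (9 * Real.log (2 + (b : ℝ)) ^ 2) * (17 * (T1 + T2 + T3)) := by
        apply mul_le_mul_of_nonneg_right h9 (by positivity)
    _ = 153 * (T1 + T2 + T3) * Real.log (2 + (b : ℝ)) ^ (2:ℕ) := by ring
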